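/- Safe screening test: let β* minimize the OWL primal with λ non-increasing non-negative, let θ* = Xβ* - y, and let θ ∈ ℝⁿ, β ∈ ℝ^d satisfy ‖θ - θ*‖ ≤ sqrt(2G(β,θ)) for the duality gap G(β,θ) ≥ 0. If |x_iᵀθ| + ‖x_i‖·sqrt(2G(β,θ)) < λ_d, then |x_iᵀθ*| < λ_d ≤ λ_{r(β*_i)}, and hence β*_i = 0. -/

import Mathlib

open Finset

/-- Euclidean dot product on Fin n → ℝ. -/
def dotp {n : ℕ} (u v : Fin n → ℝ) : ℝ := ∑ i : Fin n, u i * v i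

/-- Euclidean norm on Fin n → ℝ. -/
noncomputable def enorm2 {n : ℕ} (v : Fin n → ℝ) : ℝ := Real.sqrt (∑ i : Fin n, (v i) ^ 2)

/-- The OWL penalty. -/
noncomputable def owl {d : ℕ} (lam : Fin d → ℝ) (β : Fin d → ℝ) : ℝ :=
  ∑ i : Fin d, lam i * |β (Tuple.sort (fun j => |β j|) i.rev)|

lemma enorm2_nonneg {n : ℕ} (v : Fin n → ℝ) : 0 ≤ enorm2 v := Real.sqrt_nonneg _

lemma sq_enorm2 {n : ℕ} (v : Fin n → ℝ) : enorm2 v ^ 2 = ∑ i : Fin n, (v i) ^ 2 :=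
  Real.sq_sqrt (by positivity)

lemma abs_dotp_le {n : ℕ} (u v : Fin n → ℝ) : |dotp u v| ≤ enorm2 u * enorm2 v := by
  rw [abs_le]
  have hneg : ∑ i : Fin n, (-u i) ^ 2 = ∑ i : Fin n, u i ^ 2 := by
    apply Finset.sum_congr rfl; intro i _; ring
  constructor
  · have h : ∑ i : Fin n, (-u i) * v i ≤ Real.sqrt (∑ i : Fin n, (-u i) ^ 2) *
        Real.sqrt (∑ i : Fin n, v i ^ 2) := Real.sum_mul_le_sqrt_mul_sqrt _ _ _
    rw [hneg] at h
    have h2 : ∑ i : Fin n, (-u i) * v i = -(∑ i : Fin n, u i * v i) := by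
      rw [← Finset.sum_neg_distrib]; apply Finset.sum_congr rfl; intro i _; ring
    rw [h2] at h
    unfold dotp enorm2
    linarith
  · exact Real.sum_mul_le_sqrt_mul_sqrt _ _ _

/-- Rearrangement bound: any pairing of `lam` with `|β|` is at most the OWL penalty. -/
lemma owl_ge {d : ℕ} (lam : Fin d → ℝ) (hmono : Antitone lam) (β : Fin d → ℝ)
    (e : Equiv.Perm (Fin d)) : ∑ k : Fin d, lam k * |β (e k)| ≤ owl lam β := by
  set σ := Tuple.sort (fun j => |β j|) with hσ
  set g : Fin d → ℝ := fun k => |β (σ k.rev)| with hg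
  have hganti : Antitone g := by
    intro a b hab
    have hmon : Monotone ((fun j => |β j|) ∘ σ) := Tuple.monotone_sort _
    exact hmon (Fin.rev_le_rev.mpr hab)
  have hmv : Monovary lam g := hmono.monovary hganti
  set τ : Equiv.Perm (Fin d) := e.trans (σ.symm.trans Fin.revPerm) with hτ
  have key : ∀ k : Fin d, g (τ k) = |β (e k)| := by
    intro k
    simp [hg, hτ, Fin.revPerm, σ]
  calc ∑ k : Fin d, lam k * |β (e k)| = ∑ k : Fin d, lam k * g (τ k) := by
        apply Finset.sum_congr rfl; intro k _; rw [key]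
    _ ≤ ∑ k : Fin d, lam k * g k := hmv.sum_mul_comp_perm_le_sum_mul
    _ = owl lam β := rfl

set_option maxHeartbeats 1000000 in
/-- Safe screening test for OWL regression. -/
theorem owl_safe_screening {n d : ℕ} (hd : 0 < d)
    (X : Matrix (Fin n) (Fin d) ℝ) (y : Fin n → ℝ)
    (lam : Fin d → ℝ) (hmono : Antitone lam) (hnonneg : ∀ i, 0 ≤ lam i)
    (βs : Fin d → ℝ)
    (hmin : ∀ β : Fin d → ℝ,
      (1 / 2) * (enorm2 (y - X.mulVec βs)) ^ 2 + owl lam βs ≤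
      (1 / 2) * (enorm2 (y - X.mulVec β)) ^ 2 + owl lam β)
    (θs : Fin n → ℝ) (hθs : θs = X.mulVec βs - y)
    (θ : Fin n → ℝ) (β : Fin d → ℝ) (G : ℝ) (hG : 0 ≤ G)
    (hdist : enorm2 (θ - θs) ≤ Real.sqrt (2 * G))
    (i : Fin d)
    (htest : |dotp (fun k => X k i) θ| + enorm2 (fun k => X k i) * Real.sqrt (2 * G) <
      lam ⟨d - 1, Nat.sub_lt hd one_pos⟩) :
    |dotp (fun k => X k i) θs| < lam ⟨d - 1, Nat.sub_lt hd one_pos⟩ ∧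
      lam ⟨d - 1, Nat.sub_lt hd one_pos⟩ ≤ lam (((Tuple.sort (fun j => |βs j|)).symm i).rev) ∧
      βs i = 0 := by
  set x : Fin n → ℝ := fun k => X k i with hx
  set lm : ℝ := lam ⟨d - 1, Nat.sub_lt hd one_pos⟩ with hlm
  have hlast : ∀ j : Fin d, lm ≤ lam j := by
    intro j
    apply hmono
    exact Fin.mk_le_mk.mpr (Nat.le_sub_one_of_lt j.isLt)
  -- Part 1
  have part1 : |dotp x θs| < lm := by
    have hsplit : dotp x θs = dotp x θ + dotp x (θs - θ) := by
      unfold dotp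
      rw [← Finset.sum_add_distrib]
      apply Finset.sum_congr rfl; intro k _; simp [Pi.sub_apply]; ring
    have hcs : |dotp x (θs - θ)| ≤ enorm2 x * enorm2 (θs - θ) := abs_dotp_le _ _
    have hsymm : enorm2 (θs - θ) = enorm2 (θ - θs) := by
      unfold enorm2
      congr 1
      apply Finset.sum_congr rfl; intro k _; simp [Pi.sub_apply]; ring
    have h1 : |dotp x θs| ≤ |dotp x θ| + enorm2 x * enorm2 (θ - θs) := by
      rw [hsplit, ← hsymm]
      exact (abs_add_le _ _).trans (by linarith)
    have h2 : enorm2 x * enorm2 (θ - θs) ≤ enorm2 x * Real.sqrt (2 * G) :=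
      mul_le_mul_of_nonneg_left hdist (enorm2_nonneg x)
    calc |dotp x θs| ≤ |dotp x θ| + enorm2 x * Real.sqrt (2 * G) := by linarith
      _ < lm := htest
  refine ⟨part1, hlast _, ?_⟩
  -- Part 3
  by_contra hne
  set D : ℝ := dotp x θs with hD
  set c : ℝ := ∑ k : Fin n, x k ^ 2 with hc
  have hc0 : 0 ≤ c := by positivity
  set δ : ℝ := lm - |D| with hδdef
  have hδ : 0 < δ := by simp only [hδdef]; linarith [part1]
  set t : ℝ := min |βs i| (δ / (c + 1)) with htdef
  have ht : 0 < t := lt_min (abs_pos.mpr hne) (div_pos hδ (by linarith))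
  have htle : t ≤ |βs i| := min_le_left _ _
  have htle2 : t ≤ δ / (c + 1) := min_le_right _ _
  set sg : ℝ := Real.sign (βs i) with hsg
  have hsgmul : sg * |βs i| = βs i := by
    rcases lt_trichotomy (βs i) 0 with h | h | h
    · rw [hsg, Real.sign_of_neg h, abs_of_neg h]; ring
    · exact absurd h hne
    · rw [hsg, Real.sign_of_pos h, abs_of_pos h]; ring
  have hsgcases : sg = 1 ∨ sg = -1 := by
    rcases lt_trichotomy (βs i) 0 with h | h | h
    · right; simp [hsg, Real.sign_of_neg h]
    · exact absurd h hne
    · left; simp [hsg, Real.sign_of_pos h]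
  have hsgsq : sg * sg = 1 := by rcases hsgcases with h | h <;> simp [h]
  have hsgabs : |sg| = 1 := by rcases hsgcases with h | h <;> simp [h]
  set β' : Fin d → ℝ := Function.update βs i (βs i - t * sg) with hβ'
  have hβ'i : β' i = βs i - t * sg := Function.update_self _ _ _
  have hβ'ne : ∀ j, j ≠ i → β' j = βs j := fun j hj => Function.update_of_ne hj _ _
  have habsβ'i : |β' i| = |βs i| - t := by
    rw [hβ'i]
    have heq : βs i - t * sg = sg * (|βs i| - t) := by
      rw [mul_sub, hsgmul]; ring
    rw [heq, abs_mul, hsgabs, one_mul, abs_of_nonneg (by linarith)]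
  -- residual computation
  have hres : ∀ k, (y - X.mulVec β') k = (y - X.mulVec βs) k + t * sg * x k := by
    intro k
    simp only [Pi.sub_apply, Matrix.mulVec, dotProduct]
    have hstep : ∑ j : Fin d, X k j * β' j
        = (∑ j : Fin d, X k j * βs j) - X k i * (t * sg) := by
      calc ∑ j : Fin d, X k j * β' j
          = ∑ j : Fin d, (X k j * βs j - (if j = i then X k j * (t * sg) else 0)) := by
            apply Finset.sum_congr rfl
            intro j _
            by_cases hj : j = i
            · subst hj; rw [hβ'i]; simp; ring
            · rw [hβ'ne j hj]; simp [hj]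
        _ = (∑ j : Fin d, X k j * βs j) -
            ∑ j : Fin d, (if j = i then X k j * (t * sg) else 0) :=
            Finset.sum_sub_distrib _ _
        _ = _ := by rw [Finset.sum_ite_eq' Finset.univ i (fun j => X k j * (t * sg))]; simp
    rw [hstep]
    simp [hx]
    ring
  have hrx : ∑ k : Fin n, (y - X.mulVec βs) k * x k = -D := by
    rw [hD]
    unfold dotp
    rw [← Finset.sum_neg_distrib]
    apply Finset.sum_congr rfl
    intro k _
    rw [hθs]
    simp [Pi.sub_apply]
    ring
  have hsq : enorm2 (y - X.mulVec β') ^ 2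
      = enorm2 (y - X.mulVec βs) ^ 2 - 2 * t * sg * D + t ^ 2 * c := by
    rw [sq_enorm2, sq_enorm2]
    calc ∑ k : Fin n, ((y - X.mulVec β') k) ^ 2
        = ∑ k : Fin n, (((y - X.mulVec βs) k) ^ 2
            + (2 * t * sg) * ((y - X.mulVec βs) k * x k)
            + (t ^ 2 * (sg * sg)) * (x k ^ 2)) := by
          apply Finset.sum_congr rfl
          intro k _
          rw [hres k]
          ring
      _ = (∑ k : Fin n, ((y - X.mulVec βs) k) ^ 2)
            + (2 * t * sg) * (∑ k : Fin n, (y - X.mulVec βs) k * x k)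
            + (t ^ 2 * (sg * sg)) * (∑ k : Fin n, x k ^ 2) := by
          rw [Finset.sum_add_distrib, Finset.sum_add_distrib, Finset.mul_sum, Finset.mul_sum]
      _ = _ := by rw [hrx, hsgsq, ← hc]; ring
  -- the OWL bound
  set σ' := Tuple.sort (fun j => |β' j|) with hσ'
  set k0 : Fin d := (σ'.symm i).rev with hk0
  have hσ'k0 : σ' k0.rev = i := by rw [hk0, Fin.rev_rev]; exact σ'.apply_symm_apply i
  have howl' : owl lam β' ≤ owl lam βs - t * lm := by
    have step1 : owl lam β' = (∑ k : Fin d, lam k * |βs (σ' k.rev)|) - lam k0 * t := by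
      calc owl lam β' = ∑ k : Fin d, lam k * |β' (σ' k.rev)| := rfl
        _ = ∑ k : Fin d, (lam k * |βs (σ' k.rev)| - (if k = k0 then lam k0 * t else 0)) := by
            apply Finset.sum_congr rfl
            intro k _
            by_cases hk : k = k0
            · subst hk
              rw [hσ'k0, habsβ'i]
              simp
              ring
            · have hne' : σ' k.rev ≠ i := by
                intro h
                apply hk
                rw [hk0, ← h, Equiv.symm_apply_apply, Fin.rev_rev]
              rw [hβ'ne _ hne']
              simp [hk]
        _ = _ := by
            rw [Finset.sum_sub_distrib,
              Finset.sum_ite_eq' Finset.univ k0 (fun _ => lam k0 * t)]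
            simp
    have step2 : (∑ k : Fin d, lam k * |βs (σ' k.rev)|) ≤ owl lam βs := by
      have h := owl_ge lam hmono βs (Fin.revPerm.trans σ')
      simpa [Fin.revPerm] using h
    have step3 : lm * t ≤ lam k0 * t := mul_le_mul_of_nonneg_right (hlast k0) ht.le
    rw [step1]
    linarith
  -- combine
  have hopt := hmin β'
  rw [hsq] at hopt
  clear_value x lm D c δ t sg β' σ' k0
  have hkey : t * lm ≤ t * (-(sg * D)) + t ^ 2 * c / 2 := by linarith
  have habsD : -(sg * D) ≤ |D| := by
    have h1 : -(sg * D) ≤ |sg * D| := neg_le_abs _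
    rw [abs_mul, hsgabs, one_mul] at h1
    exact h1
  have h2 : t * (-(sg * D)) ≤ t * |D| := mul_le_mul_of_nonneg_left habsD ht.le
  have htc : t * c < δ := by
    have h3 : t * (c + 1) ≤ δ := (le_div_iff₀ (by linarith)).mp htle2
    have h4 : t * c + t = t * (c + 1) := by ring
    linarith
  have hfin : t * δ ≤ t ^ 2 * c / 2 := by
    have he : t * lm = t * |D| + t * δ := by rw [hδdef]; ring
    linarith
  have hlt : t ^ 2 * c < t * δ := by
    calc t ^ 2 * c = t * (t * c) := by ring
      _ < t * δ := mul_lt_mul_of_pos_left htc ht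
  have hpos : 0 < t * δ := mul_pos ht hδ
  linarith
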